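/- Suppose F is an n-completely mixable distribution with finite variance and M is a symmetric set of probability measures on the power set of [n]. Then every joint mix X* with all marginals F and correlation matrix P_n* (diagonal 1, off-diagonal −1/(n−1)) minimizes sup_{μ∈M} ∑_{K⊆[n]} E[(∑_{i∈K} X_i)²] μ(K) over all random vectors (X_1,...,X_n) with X_i ~ F. -/

import Mathlib

open MeasureTheory ProbabilityTheory

noncomputable def cov {Ω : Type*} [MeasurableSpace Ω] (P : Measure Ω) (X Y : Ω → ℝ) : ℝ :=
  ∫ ω, (X ω - ∫ x, X x ∂P) * (Y ω - ∫ x, Y x ∂P) ∂P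

lemma myIntegMul {Ω : Type*} [MeasurableSpace Ω] {P : Measure Ω} {f g : Ω → ℝ}
    (hf : MemLp f 2 P) (hg : MemLp g 2 P) : Integrable (fun ω => f ω * g ω) P := by
  have h2 : (fun ω => f ω * g ω)
      = fun ω => ((f ω + g ω) ^ 2 - f ω ^ 2 - g ω ^ 2) / 2 := by
    funext ω; ring
  rw [h2]
  have h3 := (((hf.add hg).integrable_sq.sub hf.integrable_sq).sub hg.integrable_sq).div_const 2
  simpa [Pi.sub_apply, Pi.add_apply] using h3

lemma permSumSingle {m : ℕ} (h : Fin (m+1) → ℝ) (x : Fin (m+1)) :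
    ∑ π : Equiv.Perm (Fin (m+1)), h (π x) = (Nat.factorial m : ℝ) * ∑ i, h i := by
  have h0 : ∑ π : Equiv.Perm (Fin (m+1)), h (π x)
      = ∑ π : Equiv.Perm (Fin (m+1)), h (π 0) := by
    have := Equiv.sum_comp (Equiv.mulRight (Equiv.swap (0 : Fin (m+1)) x))
      (fun π : Equiv.Perm (Fin (m+1)) => h (π 0))
    simp only [Equiv.coe_mulRight, Equiv.Perm.mul_apply, Equiv.swap_apply_left] at this
    exact this
  rw [h0, ← Equiv.sum_comp Equiv.Perm.decomposeFin.symm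
    (fun π : Equiv.Perm (Fin (m+1)) => h (π 0))]
  rw [Fintype.sum_prod_type]
  simp only [Equiv.Perm.decomposeFin_symm_apply_zero]
  simp only [Finset.sum_const, Finset.card_univ, Fintype.card_perm, Fintype.card_fin,
    nsmul_eq_mul]
  rw [Finset.mul_sum]

lemma permSumPair {m : ℕ} (e : Fin (m+2) → Fin (m+2) → ℝ) {a b : Fin (m+2)} (hab : a ≠ b) :
    ∑ π : Equiv.Perm (Fin (m+2)), e (π a) (π b)
      = (Nat.factorial m : ℝ) * (∑ i, ∑ j, e i j - ∑ i, e i i) := by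
  set c : Fin (m+2) := Equiv.swap (0 : Fin (m+2)) a b with hc
  have hb : Equiv.swap (0 : Fin (m+2)) a c = b := Equiv.swap_apply_self _ _ _
  have hc0 : c ≠ 0 := by
    intro h
    rw [h, Equiv.swap_apply_left] at hb
    exact hab hb
  set τ : Equiv.Perm (Fin (m+2)) := Equiv.swap 0 a * Equiv.swap 1 c with hτ
  have hτ0 : τ 0 = a := by
    rw [hτ, Equiv.Perm.mul_apply,
      Equiv.swap_apply_of_ne_of_ne (by exact zero_ne_one) (Ne.symm hc0),
      Equiv.swap_apply_left]
  have hτ1 : τ 1 = b := by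
    rw [hτ, Equiv.Perm.mul_apply, Equiv.swap_apply_left, hb]
  have step1 := Equiv.sum_comp (Equiv.mulRight τ)
    (fun π : Equiv.Perm (Fin (m+2)) => e (π 0) (π 1))
  simp only [Equiv.coe_mulRight, Equiv.Perm.mul_apply, hτ0, hτ1] at step1
  rw [step1]
  rw [← Equiv.sum_comp Equiv.Perm.decomposeFin.symm
    (fun π : Equiv.Perm (Fin (m+2)) => e (π 0) (π 1)), Fintype.sum_prod_type]
  simp only [Equiv.Perm.decomposeFin_symm_apply_zero,
    Equiv.Perm.decomposeFin_symm_apply_one]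
  have hinner : ∀ p : Fin (m+2),
      ∑ σ : Equiv.Perm (Fin (m+1)), e p (Equiv.swap 0 p ((σ 0).succ))
      = (Nat.factorial m : ℝ) * ∑ q : Fin (m+1), e p (Equiv.swap 0 p q.succ) :=
    fun p => permSumSingle (fun q => e p (Equiv.swap 0 p q.succ)) 0
  simp only [hinner]
  have hq : ∀ p : Fin (m+2), ∑ q : Fin (m+1), e p (Equiv.swap 0 p q.succ)
      = (∑ j, e p j) - e p p := by
    intro p
    have h2 : ∑ j : Fin (m+2), e p (Equiv.swap 0 p j)
        = e p (Equiv.swap 0 p 0) + ∑ q : Fin (m+1), e p (Equiv.swap 0 p q.succ) :=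
      Fin.sum_univ_succ _
    have h3 : ∑ j : Fin (m+2), e p (Equiv.swap 0 p j) = ∑ j, e p j :=
      Equiv.sum_comp (Equiv.swap 0 p) (fun j => e p j)
    rw [Equiv.swap_apply_left] at h2
    linarith
  simp only [hq]
  rw [← Finset.mul_sum, Finset.sum_sub_distrib]

lemma margFacts {Ω₀ : Type*} [MeasurableSpace Ω₀] {R : Measure Ω₀} {Z : Ω₀ → ℝ}
    {F : Measure ℝ} (hm : Measurable Z) (hmap : Measure.map Z R = F)
    (hF2 : MemLp id 2 F) :
    MemLp Z 2 R ∧ (∫ ω, Z ω ∂ R = ∫ x, x ∂F) ∧ (∫ ω, Z ω ^ 2 ∂ R = ∫ x, x ^ 2 ∂F) := by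
  subst hmap
  refine ⟨?_, ?_, ?_⟩
  · have := (memLp_map_measure_iff aestronglyMeasurable_id hm.aemeasurable).mp hF2
    simpa [Function.comp_def] using this
  · rw [integral_map (f := fun x : ℝ => x) hm.aemeasurable
      measurable_id'.aestronglyMeasurable]
  · rw [integral_map (f := fun x : ℝ => x ^ 2) hm.aemeasurable (by fun_prop)]

lemma covEq {Ω₀ : Type*} [MeasurableSpace Ω₀] (R : Measure Ω₀) [IsProbabilityMeasure R]
    {f g : Ω₀ → ℝ} (hf : MemLp f 2 R) (hg : MemLp g 2 R) :
    cov R f g = ∫ ω, f ω * g ω ∂ R - (∫ ω, f ω ∂ R) * (∫ ω, g ω ∂ R) := by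
  have i1 : Integrable (fun ω => f ω * g ω) R := myIntegMul hf hg
  have i2 : Integrable f R := hf.integrable one_le_two
  have i3 : Integrable g R := hg.integrable one_le_two
  set a := ∫ ω, f ω ∂ R with ha
  set b := ∫ ω, g ω ∂ R with hbd
  have h1 : ∀ ω, (f ω - a) * (g ω - b) = f ω * g ω - b * f ω - a * g ω + a * b :=
    fun ω => by ring
  have i4 : Integrable (fun ω => f ω * g ω - b * f ω) R := i1.sub (i2.const_mul b)
  have i5 : Integrable (fun ω => f ω * g ω - b * f ω - a * g ω) R :=
    i4.sub (i3.const_mul a)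
  show (∫ ω, (f ω - a) * (g ω - b) ∂ R) = _
  simp_rw [h1]
  rw [integral_add i5 (integrable_const _), integral_sub i4 (i3.const_mul a),
    integral_sub i1 (i2.const_mul b), integral_const_mul, integral_const_mul,
    integral_const]
  simp [measure_univ]
  ring

lemma sqSumInteg {N : ℕ} {Ω₀ : Type*} [MeasurableSpace Ω₀] (R : Measure Ω₀)
    (Z : Fin N → Ω₀ → ℝ) (hZ : ∀ i, MemLp (Z i) 2 R) (K : Finset (Fin N)) :
    ∫ ω, (∑ i ∈ K, Z i ω) ^ 2 ∂ R
      = ∑ a ∈ K, ∑ b ∈ K, ∫ ω, Z a ω * Z b ω ∂ R := by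
  have h1 : ∀ ω, (∑ i ∈ K, Z i ω) ^ 2 = ∑ a ∈ K, ∑ b ∈ K, Z a ω * Z b ω := by
    intro ω; rw [sq, Finset.sum_mul_sum]
  simp_rw [h1]
  rw [integral_finset_sum _ (fun a _ =>
    integrable_finset_sum _ (fun b _ => myIntegMul (hZ a) (hZ b)))]
  exact Finset.sum_congr rfl fun a _ =>
    integral_finset_sum _ fun b _ => myIntegMul (hZ a) (hZ b)

/-- For an `n`-completely mixable `F` with finite variance and a symmetric uncertainty set `M`
of probability weights on subsets of `[n]`, every joint mix with marginals `F` and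
correlation matrix `P_n*` (all pairwise covariances `-Var(F)/(n-1)`) minimizes
`sup_{μ∈M} ∑_K E[(∑_{i∈K} X_i)²] μ(K)` over all couplings with marginals `F`. -/
theorem stmt11 {n : ℕ} (hn : 2 ≤ n) (F : Measure ℝ) [IsProbabilityMeasure F]
    (hF2 : MemLp id 2 F)
    (M : Set (Finset (Fin n) → ℝ))
    (hM : ∀ w ∈ M, (∀ K, 0 ≤ w K) ∧ ∑ K : Finset (Fin n), w K = 1)
    (hsym : ∀ w ∈ M, ∀ π : Equiv.Perm (Fin n), (fun K => w (K.image π)) ∈ M)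
    {Ω : Type*} [MeasurableSpace Ω] (P : Measure Ω) [IsProbabilityMeasure P]
    (X : Fin n → Ω → ℝ) (hmX : ∀ i, Measurable (X i))
    (hmarg : ∀ i, Measure.map (X i) P = F)
    (c : ℝ) (hJM : ∀ᵐ ω ∂P, ∑ i, X i ω = c)
    (hcorr : ∀ i j, i ≠ j → cov P (X i) (X j) = -(variance id F) / ((n : ℝ) - 1)) :
    ∀ (Ω' : Type) (m' : MeasurableSpace Ω') (Q : Measure Ω'), IsProbabilityMeasure Q →
      ∀ Y : Fin n → Ω' → ℝ, (∀ i, Measurable (Y i)) → (∀ i, Measure.map (Y i) Q = F) →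
      sSup ((fun w : Finset (Fin n) → ℝ =>
          ∑ K : Finset (Fin n), (∫ ω, (∑ i ∈ K, X i ω) ^ 2 ∂P) * w K) '' M) ≤
      sSup ((fun w : Finset (Fin n) → ℝ =>
          ∑ K : Finset (Fin n), (∫ ω', (∑ i ∈ K, Y i ω') ^ 2 ∂Q) * w K) '' M) := by
  intro Ω' m' Q hQ Y hmY hmargY
  haveI := hQ
  obtain ⟨m, rfl⟩ : ∃ m, n = m + 2 := ⟨n - 2, by omega⟩
  set mF : ℝ := ∫ x, x ∂F with hmF
  set A : ℝ := ∫ x, x ^ 2 ∂F with hA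
  set σ2 : ℝ := variance id F with hσ2
  have hvar : σ2 = A - mF ^ 2 := by
    have := variance_eq_sub hF2
    simpa [hσ2, hA, hmF, Pi.pow_apply, id_eq] using this
  -- marginal facts
  have hXf := fun i => margFacts (hmX i) (hmarg i) hF2
  have hL2X : ∀ i, MemLp (X i) 2 P := fun i => (hXf i).1
  have hXm : ∀ i, ∫ ω, X i ω ∂P = mF := fun i => (hXf i).2.1
  have hX2 : ∀ i, ∫ ω, X i ω ^ 2 ∂P = A := fun i => (hXf i).2.2
  have hYf := fun i => margFacts (hmY i) (hmargY i) hF2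
  have hL2Y : ∀ i, MemLp (Y i) 2 Q := fun i => (hYf i).1
  have hYm : ∀ i, ∫ ω', Y i ω' ∂Q = mF := fun i => (hYf i).2.1
  have hY2 : ∀ i, ∫ ω', Y i ω' ^ 2 ∂Q = A := fun i => (hYf i).2.2
  set eY : Fin (m+2) → Fin (m+2) → ℝ := fun i j => ∫ ω', Y i ω' * Y j ω' ∂Q with heY
  have heYdiag : ∀ i, eY i i = A := by
    intro i
    have h1 : ∀ ω', Y i ω' * Y i ω' = Y i ω' ^ 2 := fun ω' => (sq _).symm
    simp only [heY]
    simp_rw [h1]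
    exact hY2 i
  have hD : ∑ i, eY i i = ((m:ℝ)+2) * A := by
    simp only [heYdiag]
    rw [Finset.sum_const, Finset.card_univ, Fintype.card_fin, nsmul_eq_mul]
    push_cast; ring
  -- off-diagonal X values
  have heXoff : ∀ i j, i ≠ j →
      (∫ ω, X i ω * X j ω ∂P) = mF ^ 2 - σ2 / ((m:ℝ)+1) := by
    intro i j hij
    have h2 := hcorr i j hij
    rw [covEq P (hL2X i) (hL2X j), hXm i, hXm j] at h2
    have hc : ((m + 2 : ℕ) : ℝ) - 1 = (m:ℝ) + 1 := by push_cast; ring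
    rw [hc] at h2
    have hne : ((m:ℝ)+1) ≠ 0 := by positivity
    field_simp at h2 ⊢
    nlinarith [h2]
  -- second moment of total Y sum
  have hES : ∫ ω', ∑ i, Y i ω' ∂Q = ((m:ℝ)+2) * mF := by
    rw [integral_finset_sum _ (fun i _ => (hL2Y i).integrable one_le_two)]
    simp only [hYm]
    rw [Finset.sum_const, Finset.card_univ, Fintype.card_fin, nsmul_eq_mul]
    push_cast; ring
  have hStot : (((m:ℝ)+2) * mF) ^ 2 ≤ ∑ i, ∑ j, eY i j := by
    have hsumY : MemLp (fun ω' => ∑ i, Y i ω') 2 Q :=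
      memLp_finset_sum _ (fun i _ => hL2Y i)
    have hv := variance_nonneg (fun ω' => ∑ i, Y i ω') Q
    rw [variance_eq_sub hsumY] at hv
    simp only [Pi.pow_apply] at hv
    have h1 : ∫ ω', (∑ i, Y i ω') ^ 2 ∂Q = ∑ i, ∑ j, eY i j :=
      sqSumInteg Q Y hL2Y Finset.univ
    rw [h1, hES] at hv
    linarith
  -- closed form for X side
  have hcX : ∀ K : Finset (Fin (m+2)), ∫ ω, (∑ i ∈ K, X i ω) ^ 2 ∂P
      = (K.card : ℝ) * A + (K.card : ℝ) * ((K.card : ℝ) - 1)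
        * (mF ^ 2 - σ2 / ((m:ℝ)+1)) := by
    intro K
    rw [sqSumInteg P X hL2X K]
    have hrow : ∀ a ∈ K, ∑ b ∈ K, (∫ ω, X a ω * X b ω ∂P)
        = A + ((K.card : ℝ) - 1) * (mF ^ 2 - σ2 / ((m:ℝ)+1)) := by
      intro a ha
      rw [← Finset.add_sum_erase _ _ ha]
      have hdiag : ∫ ω, X a ω * X a ω ∂P = A := by
        have h1 : ∀ ω, X a ω * X a ω = X a ω ^ 2 := fun ω => (sq _).symm
        simp_rw [h1]; exact hX2 a
      have hoff : ∀ b ∈ K.erase a, (∫ ω, X a ω * X b ω ∂P)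
          = mF ^ 2 - σ2 / ((m:ℝ)+1) :=
        fun b hb => heXoff a b (Ne.symm (Finset.ne_of_mem_erase hb))
      rw [hdiag, Finset.sum_congr rfl hoff, Finset.sum_const,
        Finset.card_erase_of_mem ha, nsmul_eq_mul,
        Nat.cast_sub (Finset.card_pos.mpr ⟨a, ha⟩), Nat.cast_one]
    rw [Finset.sum_congr rfl hrow, Finset.sum_const, nsmul_eq_mul]
    ring
  -- expansion for Y side with permuted index set
  have hcYexp : ∀ (K : Finset (Fin (m+2))) (π : Equiv.Perm (Fin (m+2))),
      ∫ ω', (∑ i ∈ K.image π, Y i ω') ^ 2 ∂Q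
        = ∑ a ∈ K, ∑ b ∈ K, eY (π a) (π b) := by
    intro K π
    rw [sqSumInteg Q Y hL2Y]
    rw [Finset.sum_image (fun x _ y _ h => π.injective h)]
    exact Finset.sum_congr rfl fun a _ =>
      Finset.sum_image (fun x _ y _ h => π.injective h)
  -- key per-K inequality
  have hkey : ∀ K : Finset (Fin (m+2)),
      (((m+2).factorial : ℕ) : ℝ) * ∫ ω, (∑ i ∈ K, X i ω) ^ 2 ∂P
        ≤ ∑ π : Equiv.Perm (Fin (m+2)), ∫ ω', (∑ i ∈ K.image π, Y i ω') ^ 2 ∂Q := by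
    intro K
    have hR : ∑ π : Equiv.Perm (Fin (m+2)), ∫ ω', (∑ i ∈ K.image π, Y i ω') ^ 2 ∂Q
        = ∑ a ∈ K, ∑ b ∈ K, ∑ π : Equiv.Perm (Fin (m+2)), eY (π a) (π b) := by
      simp_rw [hcYexp]
      rw [Finset.sum_comm]
      exact Finset.sum_congr rfl fun a _ => Finset.sum_comm
    have hRow : ∀ a ∈ K, ∑ b ∈ K, ∑ π : Equiv.Perm (Fin (m+2)), eY (π a) (π b)
        = (((m+1).factorial : ℕ) : ℝ) * (∑ i, eY i i)
          + ((K.card : ℝ) - 1) * ((m.factorial : ℝ)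
            * ((∑ i, ∑ j, eY i j) - ∑ i, eY i i)) := by
      intro a ha
      rw [← Finset.add_sum_erase _ _ ha]
      have hdiag : ∑ π : Equiv.Perm (Fin (m+2)), eY (π a) (π a)
          = (((m+1).factorial : ℕ) : ℝ) * ∑ i, eY i i :=
        permSumSingle (m := m+1) (fun i => eY i i) a
      have hoffs : ∀ b ∈ K.erase a, ∑ π : Equiv.Perm (Fin (m+2)), eY (π a) (π b)
          = (m.factorial : ℝ) * ((∑ i, ∑ j, eY i j) - ∑ i, eY i i) :=
        fun b hb => permSumPair eY (Ne.symm (Finset.ne_of_mem_erase hb))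
      rw [hdiag, Finset.sum_congr rfl hoffs, Finset.sum_const,
        Finset.card_erase_of_mem ha, nsmul_eq_mul,
        Nat.cast_sub (Finset.card_pos.mpr ⟨a, ha⟩), Nat.cast_one]
    rw [hR, Finset.sum_congr rfl hRow, Finset.sum_const, nsmul_eq_mul, hcX K, hD]
    -- pure arithmetic
    set k : ℝ := (K.card : ℝ) with hk
    have hk0 : 0 ≤ k := Nat.cast_nonneg _
    have hkk : 0 ≤ k * (k - 1) := by
      rcases Nat.eq_zero_or_pos K.card with h | h
      · simp [hk, h]
      · have h1 : (1:ℝ) ≤ k := by rw [hk]; exact_mod_cast h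
        nlinarith
    have hfacpos : (0:ℝ) < (m.factorial : ℝ) :=
      Nat.cast_pos.mpr (Nat.factorial_pos m)
    have hf1 : (((m+1).factorial : ℕ) : ℝ) = ((m:ℝ)+1) * (m.factorial : ℝ) := by
      rw [Nat.factorial_succ]; push_cast; ring
    have hf2 : (((m+2).factorial : ℕ) : ℝ)
        = ((m:ℝ)+2) * (((m:ℝ)+1) * (m.factorial : ℝ)) := by
      show ((((m+1)+1).factorial : ℕ) : ℝ) = _
      rw [Nat.factorial_succ, Nat.cast_mul, hf1]; push_cast; ring
    have hne : ((m:ℝ)+1) ≠ 0 := by positivity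
    have hB : ((m:ℝ)+1) * (mF ^ 2 - σ2 / ((m:ℝ)+1)) = ((m:ℝ)+1) * mF ^ 2 - σ2 := by
      field_simp
    have hstep : ((m:ℝ)+2) * (((m:ℝ)+1) * (mF ^ 2 - σ2 / ((m:ℝ)+1)))
        ≤ (∑ i, ∑ j, eY i j) - ((m:ℝ)+2) * A := by
      rw [hB, hvar]
      linarith [hStot]
    rw [hf2, hf1]
    have hmul := mul_le_mul_of_nonneg_left hstep (mul_nonneg hkk hfacpos.le)
    have key2 : ((m:ℝ)+2) * (((m:ℝ)+1) * (m.factorial : ℝ))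
          * (k * (k - 1) * (mF ^ 2 - σ2 / ((m:ℝ)+1)))
        ≤ k * (k - 1) * ((m.factorial : ℝ)
            * ((∑ i, ∑ j, eY i j) - ((m:ℝ)+2) * A)) := by
      calc ((m:ℝ)+2) * (((m:ℝ)+1) * (m.factorial : ℝ))
            * (k * (k - 1) * (mF ^ 2 - σ2 / ((m:ℝ)+1)))
          = (k * (k - 1) * (m.factorial : ℝ))
            * (((m:ℝ)+2) * (((m:ℝ)+1) * (mF ^ 2 - σ2 / ((m:ℝ)+1)))) := by ring
        _ ≤ (k * (k - 1) * (m.factorial : ℝ))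
            * ((∑ i, ∑ j, eY i j) - ((m:ℝ)+2) * A) := hmul
        _ = k * (k - 1) * ((m.factorial : ℝ)
            * ((∑ i, ∑ j, eY i j) - ((m:ℝ)+2) * A)) := by ring
    linarith [key2]
  -- sSup plumbing
  have hcY0 : ∀ K : Finset (Fin (m+2)),
      0 ≤ ∫ ω', (∑ i ∈ K, Y i ω') ^ 2 ∂Q :=
    fun K => integral_nonneg fun ω' => sq_nonneg _
  have hbdd : BddAbove ((fun w : Finset (Fin (m+2)) → ℝ =>
      ∑ K : Finset (Fin (m+2)), (∫ ω', (∑ i ∈ K, Y i ω') ^ 2 ∂Q) * w K) '' M) := by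
    refine ⟨∑ K : Finset (Fin (m+2)), ∫ ω', (∑ i ∈ K, Y i ω') ^ 2 ∂Q, ?_⟩
    rintro x ⟨w, hw, rfl⟩
    obtain ⟨hw0, hw1⟩ := hM w hw
    calc ∑ K : Finset (Fin (m+2)), (∫ ω', (∑ i ∈ K, Y i ω') ^ 2 ∂Q) * w K
        ≤ ∑ K : Finset (Fin (m+2)),
            (∑ K' : Finset (Fin (m+2)), ∫ ω', (∑ i ∈ K', Y i ω') ^ 2 ∂Q) * w K :=
          Finset.sum_le_sum fun K _ => mul_le_mul_of_nonneg_right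
            (Finset.single_le_sum (fun K' _ => hcY0 K') (Finset.mem_univ K)) (hw0 K)
      _ = ∑ K' : Finset (Fin (m+2)), ∫ ω', (∑ i ∈ K', Y i ω') ^ 2 ∂Q := by
          rw [← Finset.mul_sum, hw1, mul_one]
  rcases M.eq_empty_or_nonempty with hM0 | ⟨w₀, hw₀⟩
  · simp [hM0, Real.sSup_empty]
  · have hsup0 : 0 ≤ sSup ((fun w : Finset (Fin (m+2)) → ℝ =>
        ∑ K : Finset (Fin (m+2)), (∫ ω', (∑ i ∈ K, Y i ω') ^ 2 ∂Q) * w K) '' M) := by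
      have h0 : (0:ℝ) ≤ ∑ K : Finset (Fin (m+2)),
          (∫ ω', (∑ i ∈ K, Y i ω') ^ 2 ∂Q) * w₀ K :=
        Finset.sum_nonneg fun K _ => mul_nonneg (hcY0 K) ((hM w₀ hw₀).1 K)
      exact le_trans h0 (le_csSup hbdd ⟨w₀, hw₀, rfl⟩)
    apply Real.sSup_le _ hsup0
    rintro x ⟨w, hw, rfl⟩
    obtain ⟨hw0, hw1⟩ := hM w hw
    have hπle : ∀ π : Equiv.Perm (Fin (m+2)),
        ∑ K : Finset (Fin (m+2)),
          (∫ ω', (∑ i ∈ K, Y i ω') ^ 2 ∂Q) * w (K.image π)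
        ≤ sSup ((fun w : Finset (Fin (m+2)) → ℝ =>
            ∑ K : Finset (Fin (m+2)), (∫ ω', (∑ i ∈ K, Y i ω') ^ 2 ∂Q) * w K) '' M) :=
      fun π => le_csSup hbdd ⟨_, hsym w hw π, rfl⟩
    have hsumπ : ∑ π : Equiv.Perm (Fin (m+2)), (∑ K : Finset (Fin (m+2)),
          (∫ ω', (∑ i ∈ K, Y i ω') ^ 2 ∂Q) * w (K.image π))
        ≤ (((m+2).factorial : ℕ) : ℝ) * sSup ((fun w : Finset (Fin (m+2)) → ℝ =>
            ∑ K : Finset (Fin (m+2)), (∫ ω', (∑ i ∈ K, Y i ω') ^ 2 ∂Q) * w K) '' M) := by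
      calc ∑ π : Equiv.Perm (Fin (m+2)), (∑ K : Finset (Fin (m+2)),
              (∫ ω', (∑ i ∈ K, Y i ω') ^ 2 ∂Q) * w (K.image π))
          ≤ ∑ _π : Equiv.Perm (Fin (m+2)),
              sSup ((fun w : Finset (Fin (m+2)) → ℝ =>
              ∑ K : Finset (Fin (m+2)), (∫ ω', (∑ i ∈ K, Y i ω') ^ 2 ∂Q) * w K) '' M) :=
            Finset.sum_le_sum fun π _ => hπle π
        _ = _ := by
            rw [Finset.sum_const, Finset.card_univ, Fintype.card_perm,
              Fintype.card_fin, nsmul_eq_mul]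
    have hre : ∀ π : Equiv.Perm (Fin (m+2)),
        ∑ K : Finset (Fin (m+2)), (∫ ω', (∑ i ∈ K, Y i ω') ^ 2 ∂Q) * w (K.image π)
        = ∑ K : Finset (Fin (m+2)),
            (∫ ω', (∑ i ∈ K.image ⇑π⁻¹, Y i ω') ^ 2 ∂Q) * w K := by
      intro π
      apply Fintype.sum_equiv (Equiv.finsetCongr (π : Fin (m+2) ≃ Fin (m+2)))
      intro K
      have hKK : ((K.image ⇑π).image ⇑π⁻¹) = K := by
        rw [Finset.image_image]
        simp [Function.comp_def]
      simp only [Equiv.finsetCongr_apply, Finset.map_eq_image, Equiv.coe_toEmbedding]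
      rw [hKK]
    have hlow : (((m+2).factorial : ℕ) : ℝ) * (∑ K : Finset (Fin (m+2)),
          (∫ ω, (∑ i ∈ K, X i ω) ^ 2 ∂P) * w K)
        ≤ ∑ π : Equiv.Perm (Fin (m+2)), (∑ K : Finset (Fin (m+2)),
            (∫ ω', (∑ i ∈ K, Y i ω') ^ 2 ∂Q) * w (K.image π)) := by
      simp_rw [hre]
      rw [Finset.sum_comm, Finset.mul_sum]
      apply Finset.sum_le_sum
      intro K _
      have h1 : ∑ π : Equiv.Perm (Fin (m+2)),
          (∫ ω', (∑ i ∈ K.image ⇑π⁻¹, Y i ω') ^ 2 ∂Q) * w K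
          = (∑ π : Equiv.Perm (Fin (m+2)),
              ∫ ω', (∑ i ∈ K.image ⇑π⁻¹, Y i ω') ^ 2 ∂Q) * w K := by
        rw [Finset.sum_mul]
      rw [h1]
      have h2 : ∑ π : Equiv.Perm (Fin (m+2)),
          (∫ ω', (∑ i ∈ K.image ⇑π⁻¹, Y i ω') ^ 2 ∂Q)
          = ∑ π : Equiv.Perm (Fin (m+2)),
              (∫ ω', (∑ i ∈ K.image ⇑π, Y i ω') ^ 2 ∂Q) :=
        Equiv.sum_comp (Equiv.inv (Equiv.Perm (Fin (m+2))))
          (fun π : Equiv.Perm (Fin (m+2)) =>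
            ∫ ω', (∑ i ∈ K.image ⇑π, Y i ω') ^ 2 ∂Q)
      rw [h2, ← mul_assoc]
      exact mul_le_mul_of_nonneg_right (hkey K) (hw0 K)
    have hfin := le_trans hlow hsumπ
    have hpos : (0:ℝ) < (((m+2).factorial : ℕ) : ℝ) :=
      Nat.cast_pos.mpr (Nat.factorial_pos _)
    exact le_of_mul_le_mul_left hfin hpos
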